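/- Let G be a finite game graph. For all players i, j, the signal λ_j^i mapping each history π to the set { β^i(v') | v' is the last position of some history π' ∈ P^j(π) } ⊆ B^i is a finite-state signal (implemented by a Moore machine with input alphabet V), and it is information-consistent for player j. -/

import Mathlib

/-- A finite game graph for `n` players: positions `V` with initial position `init`,
action sets `A i`, observation sets `B i`, a move relation labelled by action
profiles (with no dead ends), and observation functions. -/
structure GameGraph (n : ℕ) (V : Type) (A : Fin n → Type) (B : Fin n → Type) where
  init : V
  move : V → (∀ i, A i) → V → Prop
  noDeadEnd : ∀ v a, ∃ w, move v a w
  obs : ∀ i : Fin n, V → B i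

/-- A Moore machine with finite state set `Q`, input alphabet `σ`, output alphabet `γ`. -/
structure Moore (σ γ : Type) where
  Q : Type
  finQ : Fintype Q
  q0 : Q
  δ : Q → σ → Q
  out : Q → γ

namespace Moore

/-- The output letter of a Moore machine after reading a word. -/
def output {σ γ : Type} (mc : Moore σ γ) (w : List σ) : γ :=
  mc.out (w.foldl mc.δ mc.q0)

/-- The output word of a Moore machine along a word: the `k`-th letter is the
output after reading the prefix of length `k+1`. -/
def outWord {σ γ : Type} (mc : Moore σ γ) (w : List σ) : List γ :=
  ((w.scanl mc.δ mc.q0).drop 1).map mc.out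

end Moore

/-- A deterministic parity automaton over alphabet `α`. -/
structure ParityAut (α : Type) where
  Q : Type
  finQ : Fintype Q
  q0 : Q
  δ : Q → α → Q
  prio : Q → ℕ

namespace ParityAut

/-- The run of a deterministic parity automaton on an infinite word. -/
def run {α : Type} (d : ParityAut α) (f : ℕ → α) : ℕ → d.Q
  | 0 => d.q0
  | t + 1 => d.δ (run d f t) (f t)

/-- Parity acceptance: the least priority occurring infinitely often is even. -/
def Accepts {α : Type} (d : ParityAut α) (f : ℕ → α) : Prop :=
  Even (sInf { p | ∃ᶠ t in Filter.atTop, d.prio (d.run f t) = p })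

end ParityAut

/-- A deterministic Büchi automaton over alphabet `α` with state set `σ`. -/
structure DetBuchi (α σ : Type) where
  q0 : σ
  δ : σ → α → σ
  accept : Set σ

namespace DetBuchi

/-- The run of a deterministic Büchi automaton on an infinite word. -/
def run {α σ : Type} (d : DetBuchi α σ) (f : ℕ → α) : ℕ → σ
  | 0 => d.q0
  | t + 1 => d.δ (run d f t) (f t)

/-- Büchi acceptance: the run visits accepting states infinitely often. -/
def Accepts {α σ : Type} (d : DetBuchi α σ) (f : ℕ → α) : Prop :=
  ∃ᶠ t in Filter.atTop, d.run f t ∈ d.accept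

end DetBuchi

namespace GameGraph

variable {n : ℕ} {V : Type} {A B : Fin n → Type}

/-- Two positions are linked by a move (for some action profile). -/
def step (G : GameGraph n V A B) (u w : V) : Prop := ∃ a, G.move u a w

/-- A history: a nonempty sequence starting at the initial position, each
consecutive pair lying on a move. -/
def IsHistory (G : GameGraph n V A B) (π : List V) : Prop :=
  π.head? = some G.init ∧ π.Chain' G.step

/-- The observation sequence of player `i` along a history (the observation at
the initial position is discarded). -/
def obsSeq (G : GameGraph n V A B) (i : Fin n) (π : List V) : List (B i) :=
  (π.drop 1).map (G.obs i)

/-- Histories are indistinguishable for player `i` if they yield the same observations. -/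
def Indist (G : GameGraph n V A B) (i : Fin n) (π π' : List V) : Prop :=
  G.obsSeq i π = G.obsSeq i π'

/-- The information set of player `i` at history `π`. -/
def InfoSet (G : GameGraph n V A B) (i : Fin n) (π : List V) : Set (List V) :=
  { π' | G.IsHistory π' ∧ G.Indist i π π' }

/-- A history yields hierarchical information if the information sets of players
are totally ordered by inclusion. -/
def HistHI (G : GameGraph n V A B) (π : List V) : Prop :=
  ∀ i j : Fin n, G.InfoSet i π ⊆ G.InfoSet j π ∨ G.InfoSet j π ⊆ G.InfoSet i π

/-- Static hierarchical information: there is a total order of the players such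
that along every history, the information sets respect this order. -/
def StaticHI (G : GameGraph n V A B) : Prop :=
  ∃ ord : Fin n → Fin n → Prop, IsLinearOrder (Fin n) ord ∧
    ∀ i j : Fin n, ord i j → ∀ π, G.IsHistory π → G.InfoSet i π ⊆ G.InfoSet j π

/-- Hierarchical observation: there is a total order of the players such that
the observation of a smaller player determines that of a bigger player, positionally. -/
def HierObs (G : GameGraph n V A B) : Prop :=
  ∃ ord : Fin n → Fin n → Prop, IsLinearOrder (Fin n) ord ∧
    ∀ i j : Fin n, ord i j → ∀ v v' : V, G.obs i v = G.obs i v' → G.obs j v = G.obs j v'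

/-- Dynamic hierarchical information: every history yields hierarchical information. -/
def DynamicHI (G : GameGraph n V A B) : Prop := ∀ π, G.IsHistory π → G.HistHI π

/-- The prefix `v₀ … v_t` of a play, as a list. -/
def playPrefix (f : ℕ → V) (t : ℕ) : List V := (List.range (t + 1)).map f

/-- A play: an infinite sequence all of whose prefixes are histories. -/
def IsPlay (G : GameGraph n V A B) (f : ℕ → V) : Prop :=
  ∀ t, G.IsHistory (playPrefix f t)

/-- A play yields recurring hierarchical information if infinitely many of its
prefix histories yield hierarchical information. -/
def PlayRecurringHI (G : GameGraph n V A B) (f : ℕ → V) : Prop :=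
  ∀ T, ∃ t, T ≤ t ∧ G.HistHI (playPrefix f t)

/-- A game yields recurring hierarchical information if every play does. -/
def RecurringHI (G : GameGraph n V A B) : Prop :=
  ∀ f, G.IsPlay f → G.PlayRecurringHI f

/-- `[t, t+ℓ]` is a gap of the play `f`: no prefix of length `r ∈ [t, t+ℓ]` yields
hierarchical information.  The length of this gap is `ℓ + 1`. -/
def IsGap (G : GameGraph n V A B) (f : ℕ → V) (t ℓ : ℕ) : Prop :=
  ∀ r, t ≤ r → r ≤ t + ℓ → ¬ G.HistHI (playPrefix f r)

/-- Information-consistency of a strategy profile: each component is constant on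
indistinguishability classes of histories. -/
def Consistent (G : GameGraph n V A B) (s : ∀ i, List V → A i) : Prop :=
  ∀ (i : Fin n) (π π' : List V),
    G.IsHistory π → G.IsHistory π' → G.Indist i π π' → s i π = s i π'

/-- A play follows a strategy profile. -/
def Follows (G : GameGraph n V A B) (s : ∀ i, List V → A i) (f : ℕ → V) : Prop :=
  f 0 = G.init ∧ ∀ t, ∃ a, G.move (f t) a (f (t + 1)) ∧ ∀ i, a i = s i (playPrefix f t)

/-- A distributed winning strategy for winning condition `W`: an information-consistent
profile all of whose outcomes lie in `W`. -/
def WinningProfile (G : GameGraph n V A B) (W : Set (ℕ → V)) (s : ∀ i, List V → A i) : Prop :=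
  G.Consistent s ∧ ∀ f, G.Follows s f → f ∈ W

/-- A finite-state strategy for player `i`: implemented by a Moore machine reading
the observation sequence of the history. -/
def FinStateStrategy (G : GameGraph n V A B) (i : Fin n) (si : List V → A i) : Prop :=
  ∃ mc : Moore (B i) (A i), ∀ π, G.IsHistory π → si π = mc.output (G.obsSeq i π)

/-- The game admits a distributed winning strategy for `W`. -/
def HasDWS (G : GameGraph n V A B) (W : Set (ℕ → V)) : Prop :=
  ∃ s : ∀ i, List V → A i, G.WinningProfile W s

/-- The game admits a finite-state distributed winning strategy for `W`. -/
def HasFinDWS (G : GameGraph n V A B) (W : Set (ℕ → V)) : Prop :=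
  ∃ s : ∀ i, List V → A i, G.WinningProfile W s ∧ ∀ i, G.FinStateStrategy i (s i)

/-- `i ⪯_π j` : at history `π`, player `i` is at least as informed as player `j`. -/
def infoLE (G : GameGraph n V A B) (π : List V) (i j : Fin n) : Prop :=
  G.InfoSet i π ⊆ G.InfoSet j π

/-- The information rank of player `i` at history `π`: the number of players `j`
with `j ≺_π i`, or with `j < i` and `j ≈_π i`. -/
noncomputable def rank (G : GameGraph n V A B) (i : Fin n) (π : List V) : ℕ :=
  Nat.card {j : Fin n //
    (G.infoLE π j i ∧ ¬ G.infoLE π i j) ∨ (j < i ∧ G.infoLE π j i ∧ G.infoLE π i j)}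

/-- The signal `λ_j^i`: the set of observations of player `i` at the last positions of
histories in the information set of player `j`. -/
def lam (G : GameGraph n V A B) (i j : Fin n) (π : List V) : Set (B i) :=
  { b | ∃ π', π' ∈ G.InfoSet j π ∧ ∃ v, π'.getLast? = some v ∧ G.obs i v = b }

/-- Players `i` and `j` cross at stage `ℓ` of the play `f`. -/
def Crossing (G : GameGraph n V A B) (f : ℕ → V) (ℓ : ℕ) (i j : Fin n) : Prop :=
  G.InfoSet i (playPrefix f ℓ) ⊂ G.InfoSet j (playPrefix f ℓ) ∧
  G.InfoSet j (playPrefix f (ℓ + 1)) ⊂ G.InfoSet i (playPrefix f (ℓ + 1))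

/-- A game is cross-free if no two players cross at any stage of any play. -/
def CrossFree (G : GameGraph n V A B) : Prop :=
  ∀ f, G.IsPlay f → ∀ (ℓ : ℕ) (i j : Fin n), ¬ G.Crossing f ℓ i j

end GameGraph

namespace GameGraph

variable {n : ℕ} {V : Type} {A B : Fin n → Type}

/-- Set of possible last positions of histories indistinguishable (for `j`) from `π`. -/
def sstate (G : GameGraph n V A B) (j : Fin n) (π : List V) : Set V :=
  { v | ∃ π', G.IsHistory π' ∧ G.obsSeq j π' = G.obsSeq j π ∧ π'.getLast? = some v }

lemma IsHistory.ne_nil {G : GameGraph n V A B} {π : List V} (h : G.IsHistory π) : π ≠ [] := by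
  intro hnil; rw [hnil] at h; simp [IsHistory] at h

lemma obsSeq_snoc (G : GameGraph n V A B) (j : Fin n) {π : List V} (h : π ≠ []) (x : V) :
    G.obsSeq j (π ++ [x]) = G.obsSeq j π ++ [G.obs j x] := by
  have h1 : (1 : ℕ) ≤ π.length := List.length_pos_iff.2 h
  simp [obsSeq, List.drop_append_of_le_length h1]

lemma obsSeq_length (G : GameGraph n V A B) (j : Fin n) (π : List V) :
    (G.obsSeq j π).length = π.length - 1 := by
  simp [obsSeq]

lemma isHistory_snoc_iff (G : GameGraph n V A B) {π : List V} (h : π ≠ []) (x : V) :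
    G.IsHistory (π ++ [x]) ↔ G.IsHistory π ∧ G.step (π.getLast h) x := by
  constructor
  · rintro ⟨hhead, hchain⟩
    rw [List.Chain', List.isChain_append] at hchain
    obtain ⟨hc1, -, hc3⟩ := hchain
    refine ⟨⟨?_, hc1⟩, hc3 _ (List.getLast?_eq_getLast h) x rfl⟩
    · obtain ⟨a, l, rfl⟩ := List.exists_cons_of_ne_nil h
      simpa using hhead
  · rintro ⟨⟨hhead, hchain⟩, hstep⟩
    constructor
    · obtain ⟨a, l, rfl⟩ := List.exists_cons_of_ne_nil h
      simpa using hhead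
    · rw [List.Chain', List.isChain_append]
      refine ⟨hchain, List.isChain_singleton x, ?_⟩
      intro u hu y hy
      rw [List.getLast?_eq_getLast h] at hu
      simp at hy
      subst hy
      cases hu
      exact hstep

lemma sstate_single (G : GameGraph n V A B) (j : Fin n) {x : V} (hx : G.IsHistory [x]) :
    G.sstate j [x] = {G.init} := by
  have hx' : x = G.init := by
    have := hx.1; simp at this; exact this
  ext v
  simp only [sstate, Set.mem_setOf_eq, Set.mem_singleton_iff]
  constructor
  · rintro ⟨π', hπ', hobs, hlast⟩
    have hlen : (G.obsSeq j π').length = 0 := by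
      rw [hobs]; simp [obsSeq]
    rw [obsSeq_length] at hlen
    have h1 : π'.length = 1 := by
      have := List.length_pos_iff.2 hπ'.ne_nil
      omega
    obtain ⟨a, ha⟩ := List.length_eq_one_iff.1 h1
    subst ha
    have : a = G.init := by have := hπ'.1; simp at this; exact this
    subst this
    simp at hlast
    exact hlast.symm
  · rintro rfl
    refine ⟨[G.init], ?_, ?_, ?_⟩
    · exact ⟨by simp, List.isChain_singleton _⟩
    · simp [obsSeq]
    · simp

lemma foldl_sstate (G : GameGraph n V A B) (j : Fin n)
    (δ : Option (Set V) → V → Option (Set V))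
    (hδ0 : ∀ v, δ none v = some {G.init})
    (hδ1 : ∀ S v, δ (some S) v =
      some { w | (∃ u ∈ S, G.step u w) ∧ G.obs j w = G.obs j v }) :
    ∀ π : List V, G.IsHistory π → π.foldl δ none = some (G.sstate j π) := by
  intro π
  induction π using List.reverseRecOn with
  | nil => intro h; exact absurd rfl h.ne_nil
  | append_singleton π x ih =>
    intro h
    rcases eq_or_ne π [] with rfl | hne
    · simp only [List.nil_append, List.foldl_cons, List.foldl_nil, hδ0]
      rw [G.sstate_single j (by simpa using h)]
    · have hsplit := (G.isHistory_snoc_iff hne x).1 h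
      rw [List.foldl_append, ih hsplit.1]
      simp only [List.foldl_cons, List.foldl_nil, hδ1]
      congr 1
      ext w
      simp only [Set.mem_setOf_eq]
      constructor
      · rintro ⟨⟨u, hu, hstep⟩, hobs⟩
        obtain ⟨ρ, hρ, hρobs, hρlast⟩ := hu
        refine ⟨ρ ++ [w], ?_, ?_, ?_⟩
        · rw [G.isHistory_snoc_iff hρ.ne_nil]
          refine ⟨hρ, ?_⟩
          rw [List.getLast?_eq_getLast hρ.ne_nil] at hρlast
          cases hρlast
          exact hstep
        · rw [G.obsSeq_snoc j hρ.ne_nil, G.obsSeq_snoc j hne, hρobs, hobs]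
        · simp
      · rintro ⟨π'', hπ'', hobs, hlast⟩
        have hπne : π'' ≠ [] := hπ''.ne_nil
        have hlen : π''.length = π.length + 1 := by
          have h1 := G.obsSeq_length j π''
          rw [hobs, G.obsSeq_snoc j hne] at h1
          have h2 := List.length_pos_iff.2 hπne
          have h3 := List.length_pos_iff.2 hne
          simp [obsSeq_length] at h1
          omega
        have hρne : π''.dropLast ≠ [] := by
          have := List.length_pos_iff.2 hne
          rw [← List.length_pos_iff, List.length_dropLast]
          omega
        have hdecomp := List.dropLast_append_getLast hπne
        rw [List.getLast?_eq_getLast hπne] at hlast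
        have hwlast : π''.getLast hπne = w := by cases hlast; rfl
        set ρ := π''.dropLast with hρdef
        rw [hwlast] at hdecomp
        have hhist : G.IsHistory (ρ ++ [w]) := by rw [hdecomp]; exact hπ''
        rw [G.isHistory_snoc_iff hρne w] at hhist
        have hobs2 : G.obsSeq j (ρ ++ [w]) = G.obsSeq j π ++ [G.obs j x] := by
          rw [hdecomp, hobs, G.obsSeq_snoc j hne]
        rw [G.obsSeq_snoc j hρne] at hobs2
        have hinj := List.append_inj' hobs2 (by simp)
        have hobsw : G.obs j w = G.obs j x := by
          have := hinj.2; simpa using this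
        refine ⟨⟨ρ.getLast hρne, ⟨ρ, hhist.1, hinj.1, List.getLast?_eq_getLast hρne⟩,
          hhist.2⟩, hobsw⟩

/-- The Moore machine computing `lam i j`. -/
noncomputable def lamMachine (G : GameGraph n V A B) [Fintype V] (i j : Fin n) :
    Moore V (Set (B i)) where
  Q := Option (Set V)
  finQ := inferInstance
  q0 := none
  δ q v :=
    match q with
    | none => some {G.init}
    | some S => some { w | (∃ u ∈ S, G.step u w) ∧ G.obs j w = G.obs j v }
  out q :=
    match q with
    | none => ∅
    | some S => G.obs i '' S

end GameGraph

/-- In a finite game graph, for all players `i, j` the signal `λ_j^i`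
(mapping a history to the set of last observations of player `i` along histories in the
information set of player `j`) is a finite-state signal (computed by a Moore machine with
input alphabet `V`) and is information-consistent for player `j`. -/
theorem statement9 {n : ℕ} {V : Type} {A B : Fin n → Type}
    [Fintype V] [∀ i, Fintype (A i)] [∀ i, Fintype (B i)]
    (G : GameGraph n V A B) (i j : Fin n) :
    (∃ mc : Moore V (Set (B i)), ∀ π, G.IsHistory π → mc.output π = G.lam i j π) ∧
    (∀ π π', G.IsHistory π → G.IsHistory π' → G.Indist j π π' →
      G.lam i j π = G.lam i j π') := by
  constructor
  · refine ⟨G.lamMachine i j, ?_⟩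
    intro π hπ
    unfold Moore.output
    have hfold := G.foldl_sstate j (G.lamMachine i j).δ (fun v => rfl) (fun S v => rfl) π hπ
    rw [show List.foldl (G.lamMachine i j).δ (G.lamMachine i j).q0 π = some (G.sstate j π) from hfold]
    show G.obs i '' (G.sstate j π) = G.lam i j π
    ext b
    simp only [Set.mem_image, GameGraph.sstate, GameGraph.lam, GameGraph.InfoSet,
      GameGraph.Indist, Set.mem_setOf_eq]
    constructor
    · rintro ⟨v, ⟨π', h1, h2, h3⟩, rfl⟩
      exact ⟨π', ⟨h1, h2.symm⟩, v, h3, rfl⟩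
    · rintro ⟨π', ⟨h1, h2⟩, v, h3, rfl⟩
      exact ⟨v, ⟨π', h1, h2.symm, h3⟩, rfl⟩
  · intro π π' hπ hπ' hind
    have h : G.obsSeq j π = G.obsSeq j π' := hind
    simp only [GameGraph.lam, GameGraph.InfoSet, GameGraph.Indist, h]
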